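/- LEMMA (no active incident edge): let c ∈ (0, 1/2) and suppose p satisfies the c-fixed-point condition at every edge. Then for every vertex r, the probability that no edge incident to r is active satisfies P(A_{(rs)} fails for every neighbor s of r) ≥ (1 − 2c)/(1 − c). -/

import Mathlib

open Finset

/-- `touches e v` says that vertex `v` is an endpoint of the edge `e`. -/
def touches {V : Type*} (e : V × V) (v : V) : Prop :=
  e.1 = v ∨ e.2 = v

open Classical in
/-- The greedy matching process on edges `ends 0, ends 1, …, ends (m-1)` (arriving in
this order) with activation pattern `ω`: `greedyUpTo ends ω k` is the set of (indices of)
edges matched after the first `k` edges have been processed.  An arriving edge is matched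
iff it is active and both of its endpoints are currently unmatched. -/
noncomputable def greedyUpTo {V : Type*} {m : ℕ} (ends : Fin m → V × V)
    (ω : Fin m → Bool) : ℕ → Finset (Fin m)
  | 0 => ∅
  | k + 1 =>
    if h : k < m then
      if ω ⟨k, h⟩ = true ∧
          (∀ j ∈ greedyUpTo ends ω k,
            ¬ touches (ends j) (ends ⟨k, h⟩).1 ∧ ¬ touches (ends j) (ends ⟨k, h⟩).2)
      then insert ⟨k, h⟩ (greedyUpTo ends ω k) else greedyUpTo ends ω k
    else greedyUpTo ends ω k

open Classical in
/-- Probability of the event `P` under the (finitely supported) mass function `mass`. -/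
noncomputable def prOf {Ω : Type*} [Fintype Ω] (mass : Ω → ℝ) (P : Ω → Prop) : ℝ :=
  ∑ ω, if P ω then mass ω else 0

/-- Product Bernoulli mass on activation patterns: coordinate `i` is `true` with
probability `p i`, independently across edges. -/
noncomputable def massP {m : ℕ} (p : Fin m → ℝ) (ω : Fin m → Bool) : ℝ :=
  ∏ i, if ω i then p i else 1 - p i

/-- The event `F_e`: both endpoints of edge `i` are unmatched just before `i` is
processed by the greedy process. -/
def freeAt {V : Type*} {m : ℕ} (ends : Fin m → V × V) (ω : Fin m → Bool) (i : Fin m) :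
    Prop :=
  ∀ j ∈ greedyUpTo ends ω i.1,
    ¬ touches (ends j) (ends i).1 ∧ ¬ touches (ends j) (ends i).2

/-- The event that edge `i` ends up matched by the greedy process. -/
def matchedEdge {V : Type*} {m : ℕ} (ends : Fin m → V × V) (ω : Fin m → Bool)
    (i : Fin m) : Prop :=
  i ∈ greedyUpTo ends ω m

/-- The `c`-fixed-point condition at edge `i`:
`p i * P(F_i) = c * x i`, i.e. the greedy process matches edge `i` with probability
exactly `c * x i`. -/
def fixedPt {V : Type*} {m : ℕ} (ends : Fin m → V × V) (x p : Fin m → ℝ) (c : ℝ)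
    (i : Fin m) : Prop :=
  p i * prOf (massP p) (fun ω => freeAt ends ω i) = c * x i

section GreedyLemmas
variable {V : Type*} {m : ℕ} (ends : Fin m → V × V) (ω ω' : Fin m → Bool)

lemma greedy_mem_lt : ∀ k (j : Fin m), j ∈ greedyUpTo ends ω k → (j : ℕ) < k := by
  intro k
  induction k with
  | zero => intro j hj; simp [greedyUpTo] at hj
  | succ k IH =>
    intro j hj
    rw [greedyUpTo] at hj
    split_ifs at hj with h1 h2
    · rcases Finset.mem_insert.mp hj with h | h
      · exact h ▸ Nat.lt_succ_self k
      · exact Nat.lt_succ_of_lt (IH j h)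
    · exact Nat.lt_succ_of_lt (IH j hj)
    · exact Nat.lt_succ_of_lt (IH j hj)

lemma greedy_subset_succ (k : ℕ) :
    greedyUpTo ends ω k ⊆ greedyUpTo ends ω (k + 1) := by
  intro j hj
  rw [greedyUpTo]
  split_ifs
  · exact Finset.mem_insert_of_mem hj
  · exact hj
  · exact hj

lemma greedy_subset {k k' : ℕ} (h : k ≤ k') :
    greedyUpTo ends ω k ⊆ greedyUpTo ends ω k' := by
  induction k' with
  | zero => simpa [Nat.le_zero.mp h]
  | succ k' IH =>
    rcases Nat.lt_or_ge k (k' + 1) with h' | h'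
    · exact (IH (Nat.lt_succ_iff.mp h')).trans (greedy_subset_succ ends ω k')
    · have : k = k' + 1 := le_antisymm h h'
      subst this; exact fun _ h => h

lemma greedy_congr : ∀ k, (∀ i : Fin m, (i : ℕ) < k → ω i = ω' i) →
    greedyUpTo ends ω k = greedyUpTo ends ω' k := by
  intro k
  induction k with
  | zero => intro _; rfl
  | succ k IH =>
    intro h
    have e1 : greedyUpTo ends ω k = greedyUpTo ends ω' k :=
      IH fun i hi => h i (Nat.lt_succ_of_lt hi)
    by_cases hk : k < m
    · have e2 : ω ⟨k, hk⟩ = ω' ⟨k, hk⟩ := h ⟨k, hk⟩ (Nat.lt_succ_self k)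
      rw [greedyUpTo, greedyUpTo, dif_pos hk, dif_pos hk, e1, e2]
    · rw [greedyUpTo, greedyUpTo, dif_neg hk, dif_neg hk, e1]

lemma greedy_mem_down {j : Fin m} :
    ∀ k, j ∈ greedyUpTo ends ω k → j ∈ greedyUpTo ends ω ((j : ℕ) + 1) := by
  intro k
  induction k with
  | zero => intro hj; simp [greedyUpTo] at hj
  | succ k IH =>
    intro hj
    rcases Nat.lt_or_ge (j : ℕ) k with h' | h'
    · rw [greedyUpTo] at hj
      split_ifs at hj with h1 h2
      · rcases Finset.mem_insert.mp hj with h | h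
        · exact absurd (congrArg Fin.val h) (by simp; omega)
        · exact IH h
      · exact IH hj
      · exact IH hj
    · have : (j : ℕ) = k := by
        have := greedy_mem_lt ends ω (k+1) j hj; omega
      exact this ▸ hj

lemma matched_iff (j : Fin m) :
    matchedEdge ends ω j ↔ (ω j = true ∧ freeAt ends ω j) := by
  constructor
  · intro h
    have h1 := greedy_mem_down ends ω m h
    rw [greedyUpTo, dif_pos j.isLt] at h1
    split_ifs at h1 with hcond
    · simpa [Fin.eta, freeAt] using hcond
    · exact absurd (greedy_mem_lt ends ω _ j h1) (lt_irrefl _)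
  · rintro ⟨h1, h2⟩
    have hj : j ∈ greedyUpTo ends ω ((j : ℕ) + 1) := by
      rw [greedyUpTo, dif_pos j.isLt, if_pos]
      · exact Finset.mem_insert_self j _
      · refine ⟨by simpa [Fin.eta] using h1, by simpa [Fin.eta, freeAt] using h2⟩
    exact greedy_subset ends ω j.isLt hj

end GreedyLemmas

section ProbLemmas
variable {m : ℕ}

lemma prOf_congr {Ω : Type*} [Fintype Ω] (mass : Ω → ℝ) {P Q : Ω → Prop}
    (h : ∀ ω, P ω ↔ Q ω) : prOf mass P = prOf mass Q :=
  congrArg (prOf mass) (funext fun ω => propext (h ω))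

lemma massP_nonneg {p : Fin m → ℝ} (hp : ∀ i, 0 ≤ p i ∧ p i ≤ 1) (ω : Fin m → Bool) :
    0 ≤ massP p ω := by
  refine Finset.prod_nonneg fun i _ => ?_
  split
  · exact (hp i).1
  · linarith [(hp i).2]

lemma sum_massP (p : Fin m → ℝ) : ∑ ω : Fin m → Bool, massP p ω = 1 := by
  classical
  unfold massP
  rw [← Fintype.piFinset_univ,
    ← Finset.prod_univ_sum (fun _ : Fin m => (Finset.univ : Finset Bool))
      (fun i b => if b then p i else 1 - p i)]
  refine Finset.prod_eq_one fun i _ => by simp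

lemma prOf_nonneg {Ω : Type*} [Fintype Ω] {mass : Ω → ℝ} (hm : ∀ ω, 0 ≤ mass ω)
    (P : Ω → Prop) : 0 ≤ prOf mass P := by
  refine Finset.sum_nonneg fun ω _ => ?_
  split
  · exact hm ω
  · exact le_refl 0

lemma prOf_mono {Ω : Type*} [Fintype Ω] {mass : Ω → ℝ} (hm : ∀ ω, 0 ≤ mass ω)
    {P Q : Ω → Prop} (h : ∀ ω, P ω → Q ω) : prOf mass P ≤ prOf mass Q := by
  refine Finset.sum_le_sum fun ω _ => ?_
  by_cases hP : P ω
  · rw [if_pos hP, if_pos (h ω hP)]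
  · rw [if_neg hP]
    split
    · exact hm ω
    · exact le_refl 0

lemma prOf_not (p : Fin m → ℝ) (P : (Fin m → Bool) → Prop) :
    prOf (massP p) (fun ω => ¬ P ω) = 1 - prOf (massP p) P := by
  rw [eq_sub_iff_add_eq]
  unfold prOf
  rw [← Finset.sum_add_distrib, ← sum_massP p]
  refine Finset.sum_congr rfl fun ω _ => ?_
  by_cases hP : P ω
  · rw [if_pos hP, if_neg (not_not_intro hP), zero_add]
  · rw [if_neg hP, if_pos hP, add_zero]

lemma prOf_le_sum {Ω : Type*} [Fintype Ω] {ι : Type*} {mass : Ω → ℝ}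
    (hm : ∀ ω, 0 ≤ mass ω) (K : Finset ι) (E : ι → Ω → Prop) (P : Ω → Prop)
    (h : ∀ ω, P ω → ∃ k ∈ K, E k ω) :
    prOf mass P ≤ ∑ k ∈ K, prOf mass (E k) := by
  classical
  unfold prOf
  rw [Finset.sum_comm]
  refine Finset.sum_le_sum fun ω _ => ?_
  by_cases hω : P ω
  · rw [if_pos hω]
    obtain ⟨k, hk, hEk⟩ := h ω hω
    calc mass ω = (if E k ω then mass ω else 0) := (if_pos hEk).symm
      _ ≤ ∑ k ∈ K, (if E k ω then mass ω else 0) := by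
          refine Finset.single_le_sum (f := fun k => if E k ω then mass ω else 0)
            (fun k _ => ?_) hk
          show (0:ℝ) ≤ if E k ω then mass ω else 0
          split
          · exact hm ω
          · exact le_refl 0
  · rw [if_neg hω]
    refine Finset.sum_nonneg fun k _ => ?_
    split
    · exact hm ω
    · exact le_refl 0

lemma prOf_coord_and (p : Fin m → ℝ) (i : Fin m) (b : Bool)
    (P : (Fin m → Bool) → Prop)
    (hP : ∀ (ω : Fin m → Bool) (cc : Bool), P (Function.update ω i cc) ↔ P ω) :
    prOf (massP p) (fun ω => ω i = b ∧ P ω)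
      = (if b then p i else 1 - p i) * prOf (massP p) P := by
  classical
  set w : Fin m → Bool → ℝ := fun j cc => if cc then p j else 1 - p j with hw
  set g : (Fin m → Bool) → ℝ :=
    fun ω => (∏ j ∈ Finset.univ.erase i, w j (ω j)) * (if P ω then 1 else 0) with hgdef
  have hg : ∀ (ω : Fin m → Bool) (cc : Bool), g (Function.update ω i cc) = g ω := by
    intro ω cc
    simp only [hgdef]
    congr 1
    · refine Finset.prod_congr rfl fun j hj => ?_
      rw [Function.update_of_ne (Finset.mem_erase.mp hj).1]
    · rw [if_congr (hP ω cc) rfl rfl]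
  have hmass : ∀ ω : Fin m → Bool,
      massP p ω = w i (ω i) * ∏ j ∈ Finset.univ.erase i, w j (ω j) :=
    fun ω => (Finset.mul_prod_erase Finset.univ _ (Finset.mem_univ i)).symm
  have hinv : Function.Involutive (fun ω : Fin m → Bool => Function.update ω i (!(ω i))) := by
    intro ω
    funext j
    by_cases hj : j = i
    · subst hj; simp
    · simp [Function.update_of_ne hj]
  have hAB : ∑ ω : Fin m → Bool, (if ω i = true then g ω else 0)
      = ∑ ω : Fin m → Bool, (if ω i = false then g ω else 0) := by
    refine Fintype.sum_equiv (Function.Involutive.toPerm _ hinv) _ _ fun ω => ?_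
    have h1 : (Function.Involutive.toPerm _ hinv) ω = Function.update ω i (!(ω i)) := rfl
    rw [h1, hg]
    cases h : ω i <;> simp [h, Function.update_self]
  have key1 : ∀ (b' : Bool), prOf (massP p) (fun ω => ω i = b' ∧ P ω)
      = w i b' * ∑ ω : Fin m → Bool, (if ω i = b' then g ω else 0) := by
    intro b'
    unfold prOf
    rw [Finset.mul_sum]
    refine Finset.sum_congr rfl fun ω _ => ?_
    by_cases h1 : ω i = b'
    · by_cases h2 : P ω
      · rw [if_pos (⟨h1, h2⟩ : ω i = b' ∧ P ω), if_pos h1, hmass, h1, hgdef]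
        simp [h2]
      · rw [if_neg (fun hc : ω i = b' ∧ P ω => h2 hc.2), if_pos h1, hgdef]
        simp [h2]
    · rw [if_neg (fun hc : ω i = b' ∧ P ω => h1 hc.1), if_neg h1, mul_zero]
  have keyP : prOf (massP p) P = ∑ ω : Fin m → Bool, (if ω i = true then g ω else 0) := by
    unfold prOf
    have expand : ∀ ω : Fin m → Bool, (if P ω then massP p ω else 0) = w i (ω i) * g ω := by
      intro ω
      rw [hmass, hgdef]
      by_cases h2 : P ω
      · simp [h2]
      · simp [h2]
    rw [Finset.sum_congr rfl fun ω _ => expand ω]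
    have hsplit : ∀ ω : Fin m → Bool, w i (ω i) * g ω
        = (if ω i = true then w i true * g ω else 0)
          + (if ω i = false then w i false * g ω else 0) := by
      intro ω
      cases h : ω i <;> simp [h]
    rw [Finset.sum_congr rfl fun ω _ => hsplit ω, Finset.sum_add_distrib]
    have p1 : ∀ (b' : Bool), (∑ ω : Fin m → Bool, if ω i = b' then w i b' * g ω else 0)
        = w i b' * ∑ ω : Fin m → Bool, (if ω i = b' then g ω else 0) := by
      intro b'
      rw [Finset.mul_sum]
      refine Finset.sum_congr rfl fun ω _ => ?_
      by_cases h1 : ω i = b' <;> simp [h1]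
    rw [p1 true, p1 false, ← hAB, ← add_mul]
    have hone : w i true + w i false = 1 := by simp [hw]
    rw [hone, one_mul]
  rw [key1 b, keyP]
  cases b
  · rw [← hAB]
  · simp [hw]




lemma prOf_allFalse (p : Fin m → ℝ) (S : Finset (Fin m)) :
    prOf (massP p) (fun ω => ∀ i ∈ S, ω i = false) = ∏ i ∈ S, (1 - p i) := by
  classical
  induction S using Finset.induction_on with
  | empty =>
    rw [prOf_congr (massP p) (Q := fun _ => (0:ℕ) = 0) (by simp)]
    simp only [prOf]
    rw [Finset.prod_empty]
    simpa using sum_massP p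
  | @insert a S ha IH =>
    rw [prOf_congr (massP p) (Q := fun ω => ω a = false ∧ ∀ i ∈ S, ω i = false)
      (by intro ω; simp [Finset.forall_mem_insert])]
    rw [prOf_coord_and p a false _ (by
      intro ω cc
      refine forall₂_congr fun i hi => ?_
      rw [Function.update_of_ne (by rintro rfl; exact ha hi)])]
    rw [IH, Finset.prod_insert ha]
    simp

lemma telescope (c : ℝ) (hc0 : 0 < c) (hc2 : c < 1/2) (x q : Fin m → ℝ)
    (hx0 : ∀ i, 0 ≤ x i) :
    ∀ (n : ℕ) (S : Finset (Fin m)) (B : ℝ), S.card = n → 0 ≤ B →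
      B + ∑ i ∈ S, x i ≤ 1 →
      (∀ t ∈ S,
        (1 - c - c*B - c * ∑ k ∈ S.filter (fun k => k < t), x k) /
        (1 - c - c*B - c * (∑ k ∈ S.filter (fun k => k < t), x k) + c * x t) ≤ q t) →
      (1 - c - c*B - c * ∑ i ∈ S, x i) / (1 - c - c*B) ≤ ∏ i ∈ S, q i := by
  classical
  intro n
  induction n with
  | zero =>
    intro S B hcard hB hsum hq
    rw [Finset.card_eq_zero] at hcard
    subst hcard
    have hB1 : B ≤ 1 := by simpa using hsum
    simp only [Finset.sum_empty, Finset.prod_empty, mul_zero, sub_zero]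
    rw [div_self (by nlinarith : (1 - c - c*B) ≠ 0)]
  | succ n IH =>
    intro S B hcard hB hsum hq
    have hne : S.Nonempty := Finset.card_pos.mp (by omega)
    set t0 := S.min' hne with ht0def
    have ht0 : t0 ∈ S := S.min'_mem hne
    set S' := S.erase t0 with hS'def
    have hcard' : S'.card = n := by
      rw [hS'def, Finset.card_erase_of_mem ht0, hcard]
      omega
    have hx00 : 0 ≤ x t0 := hx0 t0
    have hsplitS : ∑ i ∈ S, x i = x t0 + ∑ i ∈ S', x i :=
      (Finset.add_sum_erase S x ht0).symm
    have hsumS'nonneg : 0 ≤ ∑ i ∈ S', x i := Finset.sum_nonneg fun i _ => hx0 i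
    -- abbreviations
    set D := 1 - c - c*B with hD
    set N := 1 - c - c*B - c * ∑ i ∈ S, x i with hN
    have hBle : B ≤ 1 := by nlinarith [hsplitS]
    have hDpos : 0 < D := by rw [hD]; nlinarith
    have hNpos : 0 < N := by rw [hN]; nlinarith
    have hD'pos : 0 < D - c * x t0 := by
      have : N ≤ D - c * x t0 := by rw [hN, hD]; nlinarith
      linarith
    -- prefix filter facts
    have hfilter_t0 : S.filter (fun k => k < t0) = ∅ := by
      refine Finset.filter_eq_empty_iff.mpr fun {k} hk => ?_
      exact not_lt_of_ge (S.min'_le k hk)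
    have hq0 : D / (D + c * x t0) ≤ q t0 := by
      have := hq t0 ht0
      rw [hfilter_t0] at this
      simpa [hD] using this
    -- hypotheses for S'
    have hq' : ∀ t ∈ S',
        (1 - c - c*(B + x t0) - c * ∑ k ∈ S'.filter (fun k => k < t), x k) /
        (1 - c - c*(B + x t0) - c * (∑ k ∈ S'.filter (fun k => k < t), x k) + c * x t)
          ≤ q t := by
      intro t ht
      have htS : t ∈ S := Finset.mem_of_mem_erase ht
      have htne : t0 ≠ t := fun h => (Finset.mem_erase.mp ht).1 h.symm
      have ht0lt : t0 < t := lt_of_le_of_ne (S.min'_le t htS) htne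
      have hfilter : S.filter (fun k => k < t) = insert t0 (S'.filter (fun k => k < t)) := by
        ext k
        simp only [Finset.mem_filter, Finset.mem_insert, hS'def, Finset.mem_erase]
        constructor
        · rintro ⟨hkS, hkt⟩
          by_cases hk0 : k = t0
          · exact Or.inl hk0
          · exact Or.inr ⟨⟨hk0, hkS⟩, hkt⟩
        · rintro (rfl | ⟨⟨_, hkS⟩, hkt⟩)
          · exact ⟨ht0, ht0lt⟩
          · exact ⟨hkS, hkt⟩
      have ht0notin : t0 ∉ S'.filter (fun k => k < t) := by
        simp [hS'def]
      have hsum_eq : ∑ k ∈ S.filter (fun k => k < t), x k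
          = x t0 + ∑ k ∈ S'.filter (fun k => k < t), x k := by
        rw [hfilter, Finset.sum_insert ht0notin]
      have hthis := hq t htS
      rw [hsum_eq] at hthis
      have e1 : 1 - c - c*(B + x t0) - c * ∑ k ∈ S'.filter (fun k => k < t), x k
          = D - c * (x t0 + ∑ k ∈ S'.filter (fun k => k < t), x k) := by
        rw [hD]; ring
      rw [e1]
      exact hthis
    have hsum' : (B + x t0) + ∑ i ∈ S', x i ≤ 1 := by
      rw [hsplitS] at hsum; linarith
    have hIH := IH S' (B + x t0) hcard' (by linarith) hsum' hq'
    have hNeq : 1 - c - c*(B + x t0) - c * ∑ i ∈ S', x i = N := by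
      rw [hN, hsplitS]; ring
    have hD'eq : 1 - c - c*(B + x t0) = D - c * x t0 := by rw [hD]; ring
    rw [hNeq, hD'eq] at hIH
    -- combine
    have hprod : ∏ i ∈ S, q i = q t0 * ∏ i ∈ S', q i :=
      (Finset.mul_prod_erase S q ht0).symm
    have hq0pos : 0 < D / (D + c * x t0) := by positivity
    have hIHpos : 0 ≤ N / (D - c * x t0) := by positivity
    have step1 : N / D ≤ (D / (D + c * x t0)) * (N / (D - c * x t0)) := by
      rw [div_mul_div_comm, div_le_div_iff₀ hDpos (by positivity)]
      nlinarith [sq_nonneg (c * x t0), mul_nonneg hNpos.le (sq_nonneg (c * x t0))]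
    have step2 : (D / (D + c * x t0)) * (N / (D - c * x t0)) ≤ q t0 * ∏ i ∈ S', q i := by
      refine mul_le_mul hq0 hIH hIHpos (le_trans hq0pos.le hq0)
    rw [hprod]
    calc N / D ≤ _ := step1
      _ ≤ _ := step2


end ProbLemmas

open Classical in
/-- No-active-incident-edge lemma (Lemma 5.4 in the paper): let `c ∈ (0, 1/2)` and suppose
the activation probabilities `p : E → [0,1]` satisfy the `c`-fixed-point condition at every
edge.  Then for every vertex `r`, the probability that no edge incident to `r` is active
is at least `(1 - 2c)/(1 - c)`. -/
theorem no_active_incident_edge {V : Type*} {m : ℕ}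
    (ends : Fin m → V × V)
    (hsimple : ∀ i, (ends i).1 ≠ (ends i).2)
    (hdist : ∀ i j : Fin m, i ≠ j →
      ¬(((ends i).1 = (ends j).1 ∧ (ends i).2 = (ends j).2) ∨
        ((ends i).1 = (ends j).2 ∧ (ends i).2 = (ends j).1)))
    (x : Fin m → ℝ)
    (hx0 : ∀ i, 0 ≤ x i)
    (hxv : ∀ v : V,
      ∑ i ∈ Finset.univ.filter (fun i => touches (ends i) v), x i ≤ 1)
    (c : ℝ) (hc0 : 0 < c) (hc2 : c < 1 / 2)
    (p : Fin m → ℝ) (hp : ∀ i, 0 ≤ p i ∧ p i ≤ 1)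
    (hfix : ∀ j : Fin m, fixedPt ends x p c j)
    (r : V) :
    prOf (massP p) (fun ω => ∀ i : Fin m, touches (ends i) r → ω i = false)
      ≥ (1 - 2 * c) / (1 - c) := by
  classical
  set R : Finset (Fin m) := Finset.univ.filter (fun i => touches (ends i) r) with hRdef
  have hsumR : ∑ i ∈ R, x i ≤ 1 := by rw [hRdef]; exact hxv r
  have hmassnn : ∀ ω, 0 ≤ massP p ω := massP_nonneg hp
  have hev : prOf (massP p) (fun ω => ∀ i : Fin m, touches (ends i) r → ω i = false)
      = ∏ i ∈ R, (1 - p i) := by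
    rw [prOf_congr (massP p) (Q := fun ω => ∀ i ∈ R, ω i = false)
      (by intro ω; simp [hRdef])]
    exact prOf_allFalse p R
  rw [ge_iff_le, hev]
  -- probability that edge j gets matched
  have hmatch : ∀ j : Fin m,
      prOf (massP p) (fun ω => matchedEdge ends ω j) = c * x j := by
    intro j
    have hind : ∀ (ω : Fin m → Bool) (cc : Bool),
        freeAt ends (Function.update ω j cc) j ↔ freeAt ends ω j := by
      intro ω cc
      have hg : greedyUpTo ends (Function.update ω j cc) (j : ℕ)
          = greedyUpTo ends ω (j : ℕ) := by
        refine greedy_congr ends _ ω (j : ℕ) fun i hi => ?_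
        have hne : i ≠ j := fun h => by rw [h] at hi; exact lt_irrefl _ hi
        exact Function.update_of_ne hne cc ω
      show (∀ j' ∈ greedyUpTo ends (Function.update ω j cc) (j : ℕ), _) ↔ _
      rw [hg]
      exact Iff.rfl
    have h1 : prOf (massP p) (fun ω => matchedEdge ends ω j)
        = prOf (massP p) (fun ω => ω j = true ∧ freeAt ends ω j) :=
      prOf_congr (massP p) (fun ω => matched_iff ends ω j)
    rw [h1, prOf_coord_and p j true (fun ω => freeAt ends ω j) hind, if_pos rfl]
    exact hfix j
  -- the per-edge bound needed for the telescoping product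
  have hqbound : ∀ t ∈ R,
      (1 - c - c*(0:ℝ) - c * ∑ k ∈ R.filter (fun k => k < t), x k) /
      (1 - c - c*(0:ℝ) - c * (∑ k ∈ R.filter (fun k => k < t), x k) + c * x t)
        ≤ 1 - p t := by
    intro t ht
    have htR : touches (ends t) r := by
      rw [hRdef] at ht
      exact (Finset.mem_filter.mp ht).2
    set Sig1 := ∑ k ∈ R.filter (fun k => k < t), x k with hSig1
    set K : Finset (Fin m) := Finset.univ.filter
      (fun j => j < t ∧ (touches (ends j) (ends t).1 ∨ touches (ends j) (ends t).2))
      with hKdef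
    -- union bound for ¬ freeAt
    have hsub : ∀ ω : Fin m → Bool, (¬ freeAt ends ω t) →
        ∃ j ∈ K, matchedEdge ends ω j := by
      intro ω hω
      have hω' : ¬ ∀ j ∈ greedyUpTo ends ω (t : ℕ),
          ¬ touches (ends j) (ends t).1 ∧ ¬ touches (ends j) (ends t).2 := hω
      push_neg at hω'
      obtain ⟨j, hjmem, hj⟩ := hω'
      refine ⟨j, ?_, ?_⟩
      · rw [hKdef]
        refine Finset.mem_filter.mpr ⟨Finset.mem_univ j, ?_, ?_⟩
        · exact Fin.lt_def.mpr (greedy_mem_lt ends ω (t : ℕ) j hjmem)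
        · by_cases h1 : touches (ends j) (ends t).1
          · exact Or.inl h1
          · exact Or.inr (hj h1)
      · exact greedy_subset ends ω t.isLt.le hjmem
    have hub : prOf (massP p) (fun ω => ¬ freeAt ends ω t) ≤ ∑ j ∈ K, c * x j := by
      calc prOf (massP p) (fun ω => ¬ freeAt ends ω t)
          ≤ ∑ j ∈ K, prOf (massP p) (fun ω => matchedEdge ends ω j) :=
            prOf_le_sum hmassnn K _ _ hsub
        _ = ∑ j ∈ K, c * x j := Finset.sum_congr rfl fun j _ => hmatch j
    -- identify the other endpoint
    obtain ⟨s, hsT, hother⟩ : ∃ s : V, touches (ends t) s ∧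
        ∀ j ∈ K, ¬ touches (ends j) r → touches (ends j) s := by
      rcases htR with h | h
      · refine ⟨(ends t).2, Or.inr rfl, fun j hj hjr => ?_⟩
        rw [hKdef] at hj
        rcases (Finset.mem_filter.mp hj).2.2 with h1 | h1
        · exact absurd (h ▸ h1) hjr
        · exact h1
      · refine ⟨(ends t).1, Or.inl rfl, fun j hj hjr => ?_⟩
        rw [hKdef] at hj
        rcases (Finset.mem_filter.mp hj).2.2 with h1 | h1
        · exact h1
        · exact absurd (h ▸ h1) hjr
    -- split the sum over K
    have hK1 : ∑ j ∈ K.filter (fun j => touches (ends j) r), c * x j ≤ c * Sig1 := by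
      rw [hSig1, ← Finset.mul_sum]
      refine mul_le_mul_of_nonneg_left ?_ hc0.le
      refine Finset.sum_le_sum_of_subset_of_nonneg ?_ (fun i _ _ => hx0 i)
      intro j hj
      have h1 := Finset.mem_filter.mp hj
      have h2 := Finset.mem_filter.mp (hKdef ▸ h1.1)
      rw [hRdef]
      exact Finset.mem_filter.mpr ⟨Finset.mem_filter.mpr ⟨Finset.mem_univ j, h1.2⟩, h2.2.1⟩
    have hK2 : ∑ j ∈ K.filter (fun j => ¬ touches (ends j) r), c * x j ≤ c * (1 - x t) := by
      rw [← Finset.mul_sum]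
      refine mul_le_mul_of_nonneg_left ?_ hc0.le
      have hsub2 : K.filter (fun j => ¬ touches (ends j) r)
          ⊆ (Finset.univ.filter (fun j => touches (ends j) s)).erase t := by
        intro j hj
        have h1 := Finset.mem_filter.mp hj
        have h2 := Finset.mem_filter.mp (hKdef ▸ h1.1)
        refine Finset.mem_erase.mpr ⟨ne_of_lt h2.2.1, ?_⟩
        exact Finset.mem_filter.mpr ⟨Finset.mem_univ j, hother j h1.1 h1.2⟩
      calc ∑ j ∈ K.filter (fun j => ¬ touches (ends j) r), x j
          ≤ ∑ j ∈ (Finset.univ.filter (fun j => touches (ends j) s)).erase t, x j :=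
            Finset.sum_le_sum_of_subset_of_nonneg hsub2 (fun i _ _ => hx0 i)
        _ = (∑ j ∈ Finset.univ.filter (fun j => touches (ends j) s), x j) - x t := by
            rw [Finset.sum_erase_eq_sub
              (Finset.mem_filter.mpr ⟨Finset.mem_univ t, hsT⟩)]
        _ ≤ 1 - x t := by linarith [hxv s]
    have hKtotal : ∑ j ∈ K, c * x j ≤ c * Sig1 + c * (1 - x t) := by
      rw [← Finset.sum_filter_add_sum_filter_not K (fun j => touches (ends j) r)
        (fun j => c * x j)]
      exact add_le_add hK1 hK2
    -- lower bound on the free probability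
    have hnot := prOf_not p (fun ω => freeAt ends ω t)
    have hFt_lb : 1 - (c * Sig1 + c * (1 - x t))
        ≤ prOf (massP p) (fun ω => freeAt ends ω t) := by
      have := le_trans hub hKtotal
      rw [hnot] at this
      linarith
    -- positivity
    have hSx : Sig1 + x t ≤ 1 := by
      have hnotmem : t ∉ R.filter (fun k => k < t) := by
        rw [Finset.mem_filter]
        rintro ⟨-, hlt⟩
        exact lt_irrefl t hlt
      have hins : x t + Sig1 = ∑ k ∈ insert t (R.filter (fun k => k < t)), x k := by
        rw [Finset.sum_insert hnotmem]
      have hsubR : insert t (R.filter (fun k => k < t)) ⊆ R := by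
        intro j hj
        rcases Finset.mem_insert.mp hj with rfl | hj
        · exact ht
        · exact (Finset.mem_filter.mp hj).1
      have := Finset.sum_le_sum_of_subset_of_nonneg hsubR (fun i _ _ => hx0 i)
      rw [← hins] at this
      linarith [hsumR]
    have hSnn : 0 ≤ Sig1 := Finset.sum_nonneg fun i _ => hx0 i
    have hApos : 0 < 1 - c - c * Sig1 := by nlinarith [hx0 t]
    have hden_pos : 0 < 1 - c - c * Sig1 + c * x t := by nlinarith [hx0 t]
    have hFt_lb2 : 1 - c - c * Sig1 + c * x t
        ≤ prOf (massP p) (fun ω => freeAt ends ω t) := le_trans (by linarith) hFt_lb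
    have hFt_pos : 0 < prOf (massP p) (fun ω => freeAt ends ω t) :=
      lt_of_lt_of_le hden_pos hFt_lb2
    have hpt : p t ≤ c * x t / (1 - c - c * Sig1 + c * x t) := by
      rw [le_div_iff₀ hden_pos]
      calc p t * (1 - c - c * Sig1 + c * x t)
          ≤ p t * prOf (massP p) (fun ω => freeAt ends ω t) :=
            mul_le_mul_of_nonneg_left hFt_lb2 (hp t).1
        _ = c * x t := hfix t
    have he : (1 - c - c * Sig1) / (1 - c - c * Sig1 + c * x t)
        = 1 - c * x t / (1 - c - c * Sig1 + c * x t) := by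
      field_simp
      ring
    have hfinal : (1 - c - c * Sig1) / (1 - c - c * Sig1 + c * x t) ≤ 1 - p t := by
      rw [he]; linarith
    calc (1 - c - c*(0:ℝ) - c * Sig1) / (1 - c - c*(0:ℝ) - c * Sig1 + c * x t)
        = (1 - c - c * Sig1) / (1 - c - c * Sig1 + c * x t) := by ring_nf
      _ ≤ 1 - p t := hfinal
  have main := telescope c hc0 hc2 x (fun i => 1 - p i) hx0 R.card R 0 rfl le_rfl
    (by simpa using hsumR) hqbound
  have hfin : (1 - 2*c)/(1-c) ≤ (1 - c - c*(0:ℝ) - c * ∑ i ∈ R, x i)/(1 - c - c*(0:ℝ)) := by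
    rw [div_le_div_iff₀ (by linarith) (by nlinarith)]
    have hSnn : 0 ≤ ∑ i ∈ R, x i := Finset.sum_nonneg fun i _ => hx0 i
    nlinarith [mul_nonneg (mul_nonneg hc0.le
      (by linarith [hsumR] : (0:ℝ) ≤ 1 - ∑ i ∈ R, x i)) (by linarith : (0:ℝ) ≤ 1 - c)]
  exact le_trans hfin (le_trans main (by simp))
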